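/- Let K be a field of characteristic different from 2, t transcendental over K, U₁,…,Uₙ pairwise coprime nonconstant squarefree polynomials in K[t], ϑᵢ² = Uᵢ, F₀ = K(t), and Fᵢ = K(t,ϑ₁,…,ϑᵢ). Then for each 1 ≤ i ≤ n: if η ∈ Fᵢ satisfies η² ∈ F₀, then there exist k ∈ F₀ and J ⊆ {1,…,i} with η = k·∏_{j∈J} ϑⱼ. -/

import Mathlib

open Polynomial

private lemma fk_step {K : Type*} [Field K] {Up V : Polynomial K}
    (hdeg : 0 < Up.natDegree) (hsf : Squarefree Up) (hcop : IsCoprime Up V)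
    {q : Polynomial K} (hq : q ≠ 0) {p : Polynomial K}
    (heq : Up * q ^ 2 = p ^ 2 * V) :
    ∃ s' s : Polynomial K, s' ≠ 0 ∧ Up * s' ^ 2 = s ^ 2 * V ∧
      s'.natDegree < q.natDegree := by
  have hU0 : Up ≠ 0 := hsf.ne_zero
  have hdvd1 : Up ∣ p ^ 2 := hcop.dvd_of_dvd_mul_right ⟨q ^ 2, heq.symm⟩
  have hdvd2 : Up ∣ p := (hsf.dvd_pow_iff_dvd two_ne_zero).mp hdvd1
  obtain ⟨s, rfl⟩ := hdvd2
  have heq2 : q ^ 2 = Up * s ^ 2 * V := by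
    apply mul_left_cancel₀ hU0
    rw [heq]; ring
  have hdvd3 : Up ∣ q := (hsf.dvd_pow_iff_dvd two_ne_zero).mp ⟨s ^ 2 * V, by rw [heq2]; ring⟩
  obtain ⟨s', rfl⟩ := hdvd3
  have hs' : s' ≠ 0 := right_ne_zero_of_mul hq
  refine ⟨s', s, hs', ?_, ?_⟩
  · apply mul_left_cancel₀ hU0
    calc Up * (Up * s' ^ 2) = (Up * s') ^ 2 := by ring
      _ = Up * s ^ 2 * V := heq2
      _ = Up * (s ^ 2 * V) := by ring
  · rw [Polynomial.natDegree_mul hU0 hs']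
    omega

private lemma fk_descent {K : Type*} [Field K] {Up V : Polynomial K}
    (hdeg : 0 < Up.natDegree) (hsf : Squarefree Up) (hcop : IsCoprime Up V) :
    ∀ q : Polynomial K, q ≠ 0 → ∀ p : Polynomial K, Up * q ^ 2 = p ^ 2 * V → False := by
  have main : ∀ N : ℕ, ∀ q : Polynomial K, q.natDegree < N → q ≠ 0 →
      ∀ p : Polynomial K, Up * q ^ 2 = p ^ 2 * V → False := by
    intro N
    induction N with
    | zero => intro q hlt; omega
    | succ N IH =>
      intro q hlt hq p heq
      obtain ⟨s', s, hs', heq', hdlt⟩ := fk_step hdeg hsf hcop hq heq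
      exact IH s' (by omega) hs' s heq'
  intro q hq p heq
  exact main (q.natDegree + 1) q (by omega) hq p heq

private lemma fk_quad_mem {K L : Type*} [Field K] [Field L] [Algebra K L]
    (E : IntermediateField K L) (c : L) (hc2 : c ^ 2 ∈ E) (hc : c ∉ E)
    {x : L} (hx : x ∈ IntermediateField.adjoin K ((E : Set L) ∪ {c})) :
    ∃ a ∈ E, ∃ b ∈ E, x = a + b * c := by
  let S : IntermediateField K L :=
  { carrier := {x : L | ∃ a ∈ E, ∃ b ∈ E, x = a + b * c}
    mul_mem' := by
      rintro x y ⟨a, ha, b, hb, rfl⟩ ⟨a', ha', b', hb', rfl⟩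
      exact ⟨a * a' + b * b' * c ^ 2,
        add_mem (mul_mem ha ha') (mul_mem (mul_mem hb hb') hc2),
        a * b' + a' * b, add_mem (mul_mem ha hb') (mul_mem ha' hb), by ring⟩
    one_mem' := ⟨1, one_mem E, 0, zero_mem E, by ring⟩
    add_mem' := by
      rintro x y ⟨a, ha, b, hb, rfl⟩ ⟨a', ha', b', hb', rfl⟩
      exact ⟨a + a', add_mem ha ha', b + b', add_mem hb hb', by ring⟩
    zero_mem' := ⟨0, zero_mem E, 0, zero_mem E, by ring⟩
    algebraMap_mem' := fun k =>
      ⟨algebraMap K L k, E.algebraMap_mem k, 0, zero_mem E, by ring⟩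
    inv_mem' := by
      rintro x ⟨a, ha, b, hb, rfl⟩
      rcases eq_or_ne (a + b * c) 0 with h0 | h0
      · rw [h0, inv_zero]
        exact ⟨0, zero_mem E, 0, zero_mem E, by ring⟩
      · set d : L := a ^ 2 - b ^ 2 * c ^ 2 with hd
        have hdE : d ∈ E := sub_mem (pow_mem ha 2) (mul_mem (pow_mem hb 2) hc2)
        have hdne : d ≠ 0 := by
          intro hd0
          have habc : a ^ 2 = b ^ 2 * c ^ 2 := by
            have := sub_eq_zero.mp hd0; linear_combination this
          rcases eq_or_ne b 0 with hb0 | hb0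
          · apply h0
            have : a ^ 2 = 0 := by rw [habc, hb0]; ring
            have ha0 : a = 0 := by
              exact pow_eq_zero_iff two_ne_zero |>.mp this
            rw [ha0, hb0]; ring
          · have hce : (c - a / b) * (c + a / b) = 0 := by
              field_simp
              linear_combination -habc
            rcases mul_eq_zero.mp hce with h | h
            · exact hc (by rw [sub_eq_zero.mp h]; exact div_mem ha hb)
            · apply hc
              have : c = -(a / b) := eq_neg_of_add_eq_zero_left h
              rw [this]; exact neg_mem (div_mem ha hb)
        refine ⟨a * d⁻¹, mul_mem ha (inv_mem hdE), -b * d⁻¹,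
          mul_mem (neg_mem hb) (inv_mem hdE), ?_⟩
        have key : (a + b * c) * (a * d⁻¹ + -b * d⁻¹ * c) = 1 := by
          have : (a + b * c) * (a * d⁻¹ + -b * d⁻¹ * c) = (a ^ 2 - b ^ 2 * c ^ 2) * d⁻¹ := by
            ring
          rw [this, ← hd, mul_inv_cancel₀ hdne]
        exact inv_eq_of_mul_eq_one_right key }
  have hle : IntermediateField.adjoin K ((E : Set L) ∪ {c}) ≤ S := by
    apply IntermediateField.adjoin_le_iff.mpr
    rintro y (hy | hy)
    · exact ⟨y, hy, 0, zero_mem E, by ring⟩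
    · rw [Set.mem_singleton_iff] at hy
      exact ⟨0, zero_mem E, 1, one_mem E, by rw [hy]; ring⟩
  exact hle hx

theorem fried_kollar_square_in_F0 (K L : Type*) [Field K] [Field L] [Algebra K L]
    (hchar : ringChar K ≠ 2)
    (t : L) (ht : Transcendental K t)
    (n : ℕ) (U : Fin n → Polynomial K)
    (hU : ∀ i, 0 < (U i).natDegree)
    (hcop : ∀ i j, i ≠ j → IsCoprime (U i) (U j))
    (hsf : ∀ i, Squarefree (U i))
    (ϑ : Fin n → L) (hϑ : ∀ i, (ϑ i) ^ 2 = Polynomial.aeval t (U i))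
    (F : ℕ → IntermediateField K L)
    (hF : ∀ m : ℕ, F m =
      IntermediateField.adjoin K ({t} ∪ (ϑ '' {j : Fin n | (j : ℕ) < m}))) :
    ∀ i : Fin n, ∀ η : L, η ∈ F ((i : ℕ) + 1) → η ^ 2 ∈ F 0 →
      ∃ k ∈ F 0, ∃ J : Finset (Fin n), (∀ j ∈ J, (j : ℕ) ≤ (i : ℕ)) ∧
        η = k * ∏ j ∈ J, ϑ j := by
  have hinj : Function.Injective (Polynomial.aeval t : K[X] →ₐ[K] L) :=
    transcendental_iff_injective.mp ht
  have hUne : ∀ i, U i ≠ 0 := fun i h => by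
    have := hU i; rw [h] at this; simp at this
  have haevne : ∀ i : Fin n, Polynomial.aeval t (U i) ≠ 0 := fun i h =>
    hUne i (hinj (by simpa using h))
  have h2 : (2 : L) ≠ 0 := by
    have h2K : (2 : K) ≠ 0 := Ring.two_ne_zero hchar
    have hmap : algebraMap K L 2 = (2 : L) := map_ofNat _ 2
    rw [← hmap]
    simp only [ne_eq, map_eq_zero_iff _ (algebraMap K L).injective]
    exact h2K
  have hmono : ∀ a b : ℕ, a ≤ b → F a ≤ F b := by
    intro a b hab
    rw [hF a, hF b]
    apply IntermediateField.adjoin.mono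
    exact Set.union_subset_union subset_rfl
      (Set.image_mono (fun j hj => lt_of_lt_of_le hj hab))
  have htm : ∀ m, t ∈ F m := by
    intro m; rw [hF m]
    exact IntermediateField.subset_adjoin K _ (Or.inl rfl)
  have haev : ∀ m (p : K[X]), Polynomial.aeval t p ∈ F m := by
    intro m p
    have h1 : Algebra.adjoin K {t} ≤ (F m).toSubalgebra :=
      Algebra.adjoin_le (Set.singleton_subset_iff.mpr (htm m))
    exact h1 (Polynomial.aeval_mem_adjoin_singleton K t)
  have hϑm : ∀ (m : ℕ) (j : Fin n), (j : ℕ) < m → ϑ j ∈ F m := by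
    intro m j hj
    rw [hF m]
    exact IntermediateField.subset_adjoin K _ (Or.inr ⟨j, hj, rfl⟩)
  have hF0 : F 0 = IntermediateField.adjoin K {t} := by
    rw [hF 0]
    congr 1
    simp
  have key : ∀ m : ℕ, ∀ η : L, η ∈ F m → η ^ 2 ∈ F 0 →
      ∃ k ∈ F 0, ∃ J : Finset (Fin n), (∀ j ∈ J, (j : ℕ) < m) ∧
        η = k * ∏ j ∈ J, ϑ j := by
    intro m
    induction m with
    | zero =>
      intro η hη hη2
      exact ⟨η, hη, ∅, by simp, by simp⟩
    | succ m IH =>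
      by_cases hmn : m < n
      · set i : Fin n := ⟨m, hmn⟩ with hidef
        have hϑnot : ϑ i ∉ F m := by
          intro hmem
          obtain ⟨k, hk, J, hJ, hkeq⟩ := IH (ϑ i) hmem (by rw [hϑ]; exact haev 0 (U i))
          have hiJ : ∀ j ∈ J, j ≠ i := by
            intro j hj hji
            have h1 := hJ j hj
            rw [hji] at h1
            exact lt_irrefl m h1
          have hsq : Polynomial.aeval t (U i)
              = k ^ 2 * Polynomial.aeval t (∏ j ∈ J, U j) := by
            calc Polynomial.aeval t (U i) = (ϑ i) ^ 2 := (hϑ i).symm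
              _ = k ^ 2 * ∏ j ∈ J, (ϑ j) ^ 2 := by rw [hkeq, mul_pow, Finset.prod_pow]
              _ = k ^ 2 * Polynomial.aeval t (∏ j ∈ J, U j) := by
                  rw [map_prod]
                  exact congrArg _ (Finset.prod_congr rfl fun j _ => hϑ j)
          have hkF : k ∈ IntermediateField.adjoin K {t} := hF0 ▸ hk
          obtain ⟨p, q, hkpq⟩ := (IntermediateField.mem_adjoin_simple_iff K k).mp hkF
          have hVne : (∏ j ∈ J, U j) ≠ 0 := Finset.prod_ne_zero_iff.mpr fun j _ => hUne j
          rcases eq_or_ne q 0 with hq0 | hq0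
          · have hk0 : k = 0 := by rw [hkpq, hq0, map_zero, div_zero]
            rw [hk0] at hsq
            rw [zero_pow two_ne_zero, zero_mul] at hsq
            exact haevne i hsq
          · have hqe : Polynomial.aeval t q ≠ 0 := fun h => hq0 (hinj (by simpa using h))
            have hpoly : U i * q ^ 2 = p ^ 2 * ∏ j ∈ J, U j := by
              apply hinj
              show Polynomial.aeval t (U i * q ^ 2)
                  = Polynomial.aeval t (p ^ 2 * ∏ j ∈ J, U j)
              rw [map_mul, map_mul, map_pow, map_pow, hsq, hkpq]
              field_simp
            have hcop' : IsCoprime (U i) (∏ j ∈ J, U j) :=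
              IsCoprime.prod_right fun j hj => hcop i j (Ne.symm (hiJ j hj))
            exact fk_descent (hU i) (hsf i) hcop' q hq0 p hpoly
        have hrep : ∀ x ∈ F (m + 1), ∃ a ∈ F m, ∃ b ∈ F m, x = a + b * ϑ i := by
          intro x hx
          apply fk_quad_mem (F m) (ϑ i) (by rw [hϑ i]; exact haev m (U i)) hϑnot
          have hle : F (m + 1) ≤ IntermediateField.adjoin K (((F m) : Set L) ∪ {ϑ i}) := by
            rw [hF (m + 1)]
            apply IntermediateField.adjoin_le_iff.mpr
            rintro y (hy | ⟨j, hj, rfl⟩)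
            · rw [Set.mem_singleton_iff] at hy
              exact IntermediateField.subset_adjoin K _ (Or.inl (by rw [hy]; exact htm m))
            · rcases Nat.lt_succ_iff_lt_or_eq.mp hj with hj' | hj'
              · exact IntermediateField.subset_adjoin K _ (Or.inl (hϑm m j hj'))
              · have : j = i := Fin.ext hj'
                rw [this]
                exact IntermediateField.subset_adjoin K _ (Or.inr rfl)
          exact hle hx
        intro η hη hη2
        obtain ⟨a, ha, b, hb, rfl⟩ := hrep η hη
        have hUiF : Polynomial.aeval t (U i) ∈ F m := haev m (U i)
        have hmem2 : 2 * a * b * ϑ i ∈ F m := by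
          have hexp : 2 * a * b * ϑ i
              = (a + b * ϑ i) ^ 2 - a ^ 2 - b ^ 2 * Polynomial.aeval t (U i) := by
            rw [← hϑ i]; ring
          rw [hexp]
          exact sub_mem (sub_mem (hmono 0 m (Nat.zero_le m) hη2) (pow_mem ha 2))
            (mul_mem (pow_mem hb 2) hUiF)
        have hab : a = 0 ∨ b = 0 := by
          by_contra hcon
          push_neg at hcon
          obtain ⟨ha0, hb0⟩ := hcon
          apply hϑnot
          have h2ab : (2 * a * b) ≠ 0 := by
            apply mul_ne_zero (mul_ne_zero h2 ha0) hb0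
          have h2abF : (2 * a * b) ∈ F m := by
            have h2F : (2 : L) ∈ F m := by
              rw [← map_ofNat (algebraMap K L) 2]
              exact (F m).algebraMap_mem 2
            exact mul_mem (mul_mem h2F ha) hb
          have : ϑ i = (2 * a * b)⁻¹ * (2 * a * b * ϑ i) := by
            field_simp
          rw [this]
          exact mul_mem (inv_mem h2abF) hmem2
        rcases hab with ha0 | hb0
        · -- η = b * ϑ i
          subst ha0
          rw [zero_add] at hη2 ⊢
          have hb2 : b ^ 2 ∈ F 0 := by
            have hUi0 : Polynomial.aeval t (U i) ∈ F 0 := haev 0 (U i)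
            have hbe2 : b ^ 2 = (b * ϑ i) ^ 2 * (Polynomial.aeval t (U i))⁻¹ := by
              rw [mul_pow, hϑ i, mul_assoc, mul_inv_cancel₀ (haevne i), mul_one]
            rw [hbe2]
            exact mul_mem hη2 (inv_mem hUi0)
          obtain ⟨k, hk, J, hJ, hbe⟩ := IH b hb hb2
          have hiJ : i ∉ J := fun hmem => lt_irrefl m (hJ i hmem)
          refine ⟨k, hk, insert i J, ?_, ?_⟩
          · intro j hj
            rcases Finset.mem_insert.mp hj with rfl | hj'
            · exact Nat.lt_succ_self m
            · exact Nat.lt_succ_of_lt (hJ j hj')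
          · rw [Finset.prod_insert hiJ, hbe]; ring
        · subst hb0
          rw [zero_mul, add_zero] at hη2 ⊢
          obtain ⟨k, hk, J, hJ, hae⟩ := IH a ha hη2
          exact ⟨k, hk, J, fun j hj => Nat.lt_succ_of_lt (hJ j hj), hae⟩
      · -- m ≥ n : F (m+1) = F m
        have hFeq : F (m + 1) = F m := by
          rw [hF (m + 1), hF m]
          have hset : {j : Fin n | (j : ℕ) < m + 1} = {j : Fin n | (j : ℕ) < m} := by
            ext j
            have := j.isLt
            simp only [Set.mem_setOf_eq]
            omega
          rw [hset]
        intro η hη hη2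
        obtain ⟨k, hk, J, hJ, he⟩ := IH η (hFeq ▸ hη) hη2
        exact ⟨k, hk, J, fun j hj => Nat.lt_succ_of_lt (hJ j hj), he⟩
  intro i η hη hη2
  obtain ⟨k, hk, J, hJ, he⟩ := key ((i : ℕ) + 1) η hη hη2
  exact ⟨k, hk, J, fun j hj => Nat.lt_succ_iff.mp (hJ j hj), he⟩
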